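/- Let q > 2. If there exist q-ary linear codes with parameters [n,k,d_1] and [n,k,d_2], then there exists a q-ary LCP of codes with parameters [n,k,d_1,d_2]; that is, there exist q-ary linear codes C_1 and C_2 of length n with dim C_1 = k, dim C_2 = n−k, C_1 + C_2 = F_q^n, the minimum distance of C_1 equal to d_1, and the minimum distance of C_2^⊥ equal to d_2. -/

import Mathlib

open scoped BigOperators

/-- The Euclidean dual of a linear code `C ⊆ F^ι`. -/
def dualCode {F : Type*} [Field F] {ι : Type*} [Fintype ι]
    (C : Submodule F (ι → F)) : Submodule F (ι → F) where
  carrier := {b | ∀ c ∈ C, ∑ i, b i * c i = 0}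
  zero_mem' := by intro c hc; simp
  add_mem' := by
    intro x y hx hy c hc
    simp only [Set.mem_setOf_eq, Pi.add_apply, add_mul, Finset.sum_add_distrib,
      hx c hc, hy c hc, add_zero]
  smul_mem' := by
    intro r x hx c hc
    simp only [Set.mem_setOf_eq, Pi.smul_apply, smul_eq_mul, mul_assoc,
      ← Finset.mul_sum, hx c hc, mul_zero]

/-- The (linear) code `C` has minimum distance `d`: some nonzero codeword has Hamming
weight `d` and every nonzero codeword has Hamming weight at least `d`. -/
def hasMinDist {F : Type*} [Field F] [DecidableEq F] {ι : Type*} [Fintype ι]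
    (C : Submodule F (ι → F)) (d : ℕ) : Prop :=
  (∃ c ∈ C, c ≠ 0 ∧ hammingNorm c = d) ∧ ∀ c ∈ C, c ≠ 0 → d ≤ hammingNorm c

section Bform
variable {F : Type*} [Field F] {n : ℕ}

variable {F : Type*} [Field F] {n : ℕ}

noncomputable def bform (F : Type*) [Field F] (n : ℕ) :
    LinearMap.BilinForm F (Fin n → F) :=
  LinearMap.mk₂ F (fun x y => ∑ i, x i * y i)
    (fun x x' y => by simp [add_mul, Finset.sum_add_distrib])
    (fun c x y => by simp [Finset.mul_sum, mul_assoc])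
    (fun x y y' => by simp [mul_add, Finset.sum_add_distrib])
    (fun c x y => by simp [Finset.mul_sum, mul_left_comm])

lemma bform_apply (x y : Fin n → F) : bform F n x y = ∑ i, x i * y i := rfl

lemma bform_comm (x y : Fin n → F) : bform F n x y = bform F n y x := by
  simp [bform_apply, mul_comm]

lemma bform_refl : (bform F n).IsRefl := by
  intro x y h; rw [bform_comm]; exact h

lemma bform_nondeg : (bform F n).Nondegenerate := by
  refine ⟨fun x hx => ?_, fun x hx => ?_⟩
  · funext i
    have := hx (Pi.single i 1)
    simpa [bform_apply, Pi.single_apply, Finset.sum_ite_eq'] using this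
  · funext i
    have := hx (Pi.single i 1)
    simpa [bform_apply, Pi.single_apply, Finset.sum_ite_eq] using this

lemma mem_dualCode {C : Submodule F (Fin n → F)} {b : Fin n → F} :
    b ∈ dualCode C ↔ ∀ c ∈ C, ∑ i, b i * c i = 0 := Iff.rfl

lemma dualCode_eq_orthogonal (C : Submodule F (Fin n → F)) :
    dualCode C = (bform F n).orthogonal C := by
  ext b
  rw [mem_dualCode, LinearMap.BilinForm.mem_orthogonal_iff]
  constructor
  · intro h c hc
    have := h c hc
    simpa [LinearMap.BilinForm.IsOrtho, bform_apply, mul_comm] using this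
  · intro h c hc
    have := h c hc
    simpa [LinearMap.BilinForm.IsOrtho, bform_apply, mul_comm] using this

lemma finrank_dualCode (C : Submodule F (Fin n → F)) :
    Module.finrank F (dualCode C) = n - Module.finrank F C := by
  rw [dualCode_eq_orthogonal,
    LinearMap.BilinForm.finrank_orthogonal bform_nondeg,
    Module.finrank_fin_fun]

lemma dualCode_dualCode (C : Submodule F (Fin n → F)) :
    dualCode (dualCode C) = C := by
  rw [dualCode_eq_orthogonal, dualCode_eq_orthogonal,
    LinearMap.BilinForm.orthogonal_orthogonal bform_nondeg bform_refl]

end Bform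

section Det
variable {F : Type*} [Field F] {k : ℕ}

variable {F : Type*} [Field F] {k : ℕ}

lemma det_eq_zero_of_rows_smul (M : Matrix (Fin k) (Fin k) F) {i j : Fin k}
    (hij : i ≠ j) (w : Fin k → F) (α β : F) (hi : M i = α • w) (hj : M j = β • w) :
    M.det = 0 := by
  conv_lhs => rw [← Matrix.updateRow_eq_self M j, hj]
  rw [Matrix.det_updateRow_smul]
  set P := M.updateRow j w with hP
  have h2 : P i = α • w := by rw [hP, Matrix.updateRow_ne hij]; exact hi
  conv_lhs => rw [← Matrix.updateRow_eq_self P i, h2]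
  rw [Matrix.det_updateRow_smul]
  have : ((P.updateRow i w)).det = 0 := by
    apply Matrix.det_zero_of_row_eq hij
    rw [Matrix.updateRow_self, Matrix.updateRow_ne (Ne.symm hij), hP,
      Matrix.updateRow_self]
  rw [this, mul_zero, mul_zero]

lemma det_add_smul_rankOne (A : Matrix (Fin k) (Fin k) F) (u v : Fin k → F) :
    ∃ c d : F, ∀ t : F,
      (Matrix.of fun i j => A i j + t * (u i * v j)).det = c + d * t := by
  classical
  have key : ∀ s : Finset (Fin k), ∃ c d : F, ∀ t : F,
      Matrix.detRowAlternating (s.piecewise (fun i => (t * u i) • v) (fun i => A i))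
        = c + d * t := by
    intro s
    rcases Nat.lt_or_ge 1 s.card with hs | hs
    · refine ⟨0, 0, fun t => ?_⟩
      obtain ⟨i, hi, j, hj, hij⟩ := Finset.one_lt_card.mp hs
      have h0 : (Matrix.of (s.piecewise (fun i => (t * u i) • v) (fun i => A i))).det = 0 := by
        apply det_eq_zero_of_rows_smul _ hij v (t * u i) (t * u j)
        · show s.piecewise (fun i => (t * u i) • v) (fun i => A i) i = _
          rw [Finset.piecewise_eq_of_mem _ _ _ hi]
        · show s.piecewise (fun i => (t * u i) • v) (fun i => A i) j = _
          rw [Finset.piecewise_eq_of_mem _ _ _ hj]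
      rw [zero_mul, add_zero]; exact h0
    · interval_cases h : s.card
      · refine ⟨A.det, 0, fun t => ?_⟩
        rw [Finset.card_eq_zero.mp h, Finset.piecewise_empty]
        rw [zero_mul, add_zero]; rfl
      · obtain ⟨i, rfl⟩ := Finset.card_eq_one.mp h
        refine ⟨0, u i * (A.updateRow i v).det, fun t => ?_⟩
        rw [Finset.piecewise_singleton]
        have : Function.update (fun i => A i) i ((t * u i) • v)
            = A.updateRow i ((t * u i) • v) := rfl
        rw [this]
        have : Matrix.detRowAlternating (A.updateRow i ((t * u i) • v))
            = (A.updateRow i ((t * u i) • v)).det := rfl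
        rw [this, Matrix.det_updateRow_smul]
        ring
  choose c d hcd using key
  refine ⟨∑ s, c s, ∑ s, d s, fun t => ?_⟩
  have expand : (Matrix.of fun i j => A i j + t * (u i * v j))
      = ((fun i => (t * u i) • v) + fun i => A i : Fin k → Fin k → F) := by
    funext i j
    simp only [Matrix.of_apply, Pi.add_apply, Pi.smul_apply, smul_eq_mul]
    ring
  have hdet : (Matrix.of fun i j => A i j + t * (u i * v j)).det
      = Matrix.detRowAlternating ((fun i => (t * u i) • v) + fun i => A i) := by
    rw [expand]; rfl
  rw [hdet]
  have hm := (Matrix.detRowAlternating (R := F) (n := Fin k)).toMultilinearMap.map_add_univ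
    (fun i => (t * u i) • v) (fun i => A i)
  simp only [AlternatingMap.coe_multilinearMap] at hm
  rw [hm]
  rw [Finset.sum_congr rfl fun s _ => hcd s t]
  rw [Finset.sum_add_distrib, ← Finset.sum_mul]

end Det

section SZ
variable {F : Type*} [Field F] {n : ℕ}

variable {F : Type*} [Field F] {n : ℕ}

lemma exists_nonzero_point [Fintype F] (hq : 2 < Fintype.card F)
    (f : (Fin n → F) → F)
    (haff : ∀ (l : Fin n) (x : Fin n → F), ∃ c d : F, ∀ t : F,
      f (Function.update x l t) = c + d * t)
    (a : Fin n → F) (hfa : f a ≠ 0) :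
    ∃ b : Fin n → F, (∀ l, b l ≠ 0) ∧ f b ≠ 0 := by
  classical
  have main : ∀ s : Finset (Fin n), ∃ b : Fin n → F, (∀ l ∈ s, b l ≠ 0) ∧ f b ≠ 0 := by
    intro s
    induction s using Finset.induction_on with
    | empty => exact ⟨a, by simp, hfa⟩
    | @insert i s hi ih =>
      obtain ⟨b, hb, hfb⟩ := ih
      obtain ⟨c, d, hcd⟩ := haff i b
      have hfb' : c + d * b i ≠ 0 := by
        rw [← hcd (b i), Function.update_eq_self]; exact hfb
      have : ∃ t : F, t ≠ 0 ∧ c + d * t ≠ 0 := by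
        by_cases hd : d = 0
        · refine ⟨1, one_ne_zero, ?_⟩
          simpa [hd] using hfb'
        · by_contra hcon
          push_neg at hcon
          have hsub : (Finset.univ : Finset F) ⊆ {0, -c / d} := by
            intro t _
            rcases eq_or_ne t 0 with rfl | ht
            · simp
            · have h0 : c + d * t = 0 := hcon t ht
              have : t = -c / d := by field_simp; linear_combination h0
              simp [this]
          have := Finset.card_le_card hsub
          have h2 : ({0, -c / d} : Finset F).card ≤ 2 :=
            (Finset.card_insert_le _ _).trans (by simp)
          rw [Finset.card_univ] at this
          omega
      obtain ⟨t, ht0, htf⟩ := this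
      refine ⟨Function.update b i t, ?_, by rw [hcd]; exact htf⟩
      intro l hl
      rcases eq_or_ne l i with rfl | hne
      · rwa [Function.update_self]
      · rw [Function.update_of_ne hne]
        exact hb l ((Finset.mem_insert.mp hl).resolve_left hne)
  exact main Finset.univ |>.imp fun b ⟨h1, h2⟩ => ⟨fun l => h1 l (Finset.mem_univ l), h2⟩

end SZ

section InfoSet
variable {F : Type*} [Field F] {n : ℕ}

lemma infoset_aux : ∀ (k : ℕ) (D : Submodule F (Fin n → F)), Module.finrank F D = k →
    ∃ S : Finset (Fin n), S.card ≤ k ∧ ∀ x ∈ D, (∀ i ∈ S, x i = 0) → x = 0 := by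
  intro k
  induction k with
  | zero =>
    intro D hD
    have : D = ⊥ := Submodule.finrank_eq_zero.mp hD
    exact ⟨∅, le_refl _, fun x hx _ => by simpa [this] using hx⟩
  | succ k ih =>
    intro D hD
    have hne : D ≠ ⊥ := by
      intro h
      rw [h, finrank_bot] at hD
      exact Nat.succ_ne_zero k hD.symm
    obtain ⟨x₀, hx₀, hx₀0⟩ := Submodule.ne_bot_iff D |>.mp hne
    have : ∃ i, x₀ i ≠ 0 := by
      by_contra h
      push_neg at h
      exact hx₀0 (funext h)
    obtain ⟨i, hi⟩ := this
    set f : D →ₗ[F] F := (LinearMap.proj i).comp D.subtype with hf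
    have hfs : Function.Surjective f := by
      intro y
      refine ⟨(y * (x₀ i)⁻¹) • ⟨x₀, hx₀⟩, ?_⟩
      show (y * (x₀ i)⁻¹) * x₀ i = y
      field_simp
    have hker : Module.finrank F (LinearMap.ker f) = k := by
      have h1 := LinearMap.finrank_range_add_finrank_ker f
      rw [LinearMap.range_eq_top.mpr hfs, finrank_top, Module.finrank_self, hD] at h1
      omega
    set D' : Submodule F (Fin n → F) := (LinearMap.ker f).map D.subtype with hD'
    have hD'rank : Module.finrank F D' = k := by
      rw [hD', Submodule.finrank_map_subtype_eq]; exact hker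
    obtain ⟨S', hS'card, hS'⟩ := ih D' hD'rank
    refine ⟨insert i S', (Finset.card_insert_le _ _).trans (by omega), ?_⟩
    intro x hx hvan
    have hxi : x i = 0 := hvan i (Finset.mem_insert_self _ _)
    have hx' : x ∈ D' := ⟨⟨x, hx⟩, hxi, rfl⟩
    exact hS' x hx' fun j hj => hvan j (Finset.mem_insert_of_mem hj)

lemma exists_infoset (D : Submodule F (Fin n → F)) {k : ℕ} (hD : Module.finrank F D = k) :
    ∃ S : Finset (Fin n), S.card = k ∧ ∀ x ∈ D, (∀ i ∈ S, x i = 0) → x = 0 := by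
  obtain ⟨S₀, hS₀card, hS₀⟩ := infoset_aux k D hD
  have hkn : k ≤ n := by
    rw [← hD]
    have := Submodule.finrank_le D
    rwa [Module.finrank_fin_fun] at this
  obtain ⟨S, hsub, hcard⟩ := Finset.exists_superset_card_eq hS₀card (by simpa using hkn)
  exact ⟨S, hcard, fun x hx hvan => hS₀ x hx fun i hiS₀ => hvan i (hsub hiS₀)⟩

lemma exists_single_proj (D : Submodule F (Fin n → F)) (S : Finset (Fin n))
    (hcard : S.card = Module.finrank F D)
    (hinj : ∀ x ∈ D, (∀ i ∈ S, x i = 0) → x = 0)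
    (l₀ : Fin n) (hl₀ : l₀ ∈ S) :
    ∃ v ∈ D, v l₀ = 1 ∧ ∀ l ∈ S, l ≠ l₀ → v l = 0 := by
  classical
  set res : D →ₗ[F] ({x // x ∈ S} → F) :=
    LinearMap.pi (fun i => (LinearMap.proj (i : Fin n)).comp D.subtype) with hres
  have hresinj : Function.Injective res := by
    rw [← LinearMap.ker_eq_bot]
    rw [Submodule.eq_bot_iff]
    rintro ⟨x, hx⟩ hker
    have : ∀ i ∈ S, x i = 0 := by
      intro i hiS
      exact congrFun hker ⟨i, hiS⟩
    have := hinj x hx this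
    exact Subtype.ext this
  have hsurj : Function.Surjective res := by
    rw [← LinearMap.range_eq_top]
    apply Submodule.eq_top_of_finrank_eq
    rw [LinearMap.finrank_range_of_inj hresinj]
    rw [Module.finrank_pi]
    rw [Fintype.card_coe, hcard]
  obtain ⟨⟨v, hv⟩, hveq⟩ := hsurj (Pi.single ⟨l₀, hl₀⟩ 1)
  refine ⟨v, hv, ?_, ?_⟩
  · have := congrFun hveq ⟨l₀, hl₀⟩
    simpa [hres] using this
  · intro l hl hne
    have := congrFun hveq ⟨l, hl⟩
    have hne' : (⟨l, hl⟩ : {x // x ∈ S}) ≠ ⟨l₀, hl₀⟩ := by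
      simp [Subtype.ext_iff, hne]
    simpa [hres, Pi.single_apply, hne'] using this

end InfoSet

section Perm
variable {F : Type*} [Field F] {n : ℕ}

lemma exists_perm_map (S₁ S₂ : Finset (Fin n)) (h : S₁.card = S₂.card) :
    ∃ σ : Equiv.Perm (Fin n), ∀ l, l ∉ S₁ → σ l ∉ S₂ := by
  classical
  have e : {x // x ∈ S₁} ≃ {x // x ∈ S₂} :=
    Fintype.equivOfCardEq (by simp [Fintype.card_coe, h])
  have f : {x // ¬ x ∈ S₁} ≃ {x // ¬ x ∈ S₂} :=
    Fintype.equivOfCardEq (by simp [Fintype.card_subtype_compl, Fintype.card_coe, h])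
  refine ⟨Equiv.subtypeCongr e f, fun l hl => ?_⟩
  have : Equiv.subtypeCongr e f l = (f ⟨l, hl⟩ : Fin n) := by
    simp [Equiv.subtypeCongr, Equiv.sumCompl_symm_apply_of_neg hl]
  rw [this]
  exact (f ⟨l, hl⟩).2

end Perm

section Mon
variable {F : Type*} [Field F] [DecidableEq F] {n : ℕ}

noncomputable def monEquiv (a : Fin n → F) (ha : ∀ l, a l ≠ 0) (σ : Equiv.Perm (Fin n)) :
    (Fin n → F) ≃ₗ[F] (Fin n → F) where
  toFun x := fun l => a l * x (σ l)
  invFun y := fun m => (a (σ.symm m))⁻¹ * y (σ.symm m)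
  left_inv x := by
    funext m
    simp only [Equiv.apply_symm_apply]
    rw [inv_mul_cancel_left₀ (ha _)]
  right_inv y := by
    funext l
    simp only [Equiv.symm_apply_apply]
    rw [mul_inv_cancel_left₀ (ha _)]
  map_add' x y := by funext l; simp [mul_add]
  map_smul' c x := by funext l; simp [Pi.smul_apply, smul_eq_mul]; ring

omit [DecidableEq F] in
lemma monEquiv_apply (a : Fin n → F) (ha : ∀ l, a l ≠ 0) (σ : Equiv.Perm (Fin n))
    (x : Fin n → F) (l : Fin n) : monEquiv a ha σ x l = a l * x (σ l) := rfl

lemma hammingNorm_monEquiv (a : Fin n → F) (ha : ∀ l, a l ≠ 0) (σ : Equiv.Perm (Fin n))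
    (x : Fin n → F) : hammingNorm (monEquiv a ha σ x) = hammingNorm x := by
  classical
  have h1 : hammingNorm (monEquiv a ha σ x)
      = (Finset.univ.filter fun l => x (σ l) ≠ 0).card := by
    apply Finset.card_bij (fun l _ => l)
    · intro l hl
      simp only [Finset.mem_filter, Finset.mem_univ, true_and] at hl ⊢
      intro h
      exact hl (by rw [monEquiv_apply, h, mul_zero])
    · intro l l' _ _ h; exact h
    · intro l hl
      refine ⟨l, ?_, rfl⟩
      simp only [Finset.mem_filter, Finset.mem_univ, true_and] at hl ⊢
      rw [monEquiv_apply]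
      exact mul_ne_zero (ha l) hl
  rw [h1]
  show _ = (Finset.univ.filter fun m => x m ≠ 0).card
  apply Finset.card_bij (fun l _ => σ l)
  · intro l hl
    simpa using (Finset.mem_filter.mp hl).2
  · intro l l' _ _ h
    exact σ.injective h
  · intro m hm
    refine ⟨σ.symm m, ?_, by simp⟩
    simp only [Finset.mem_filter, Finset.mem_univ, true_and, Equiv.apply_symm_apply]
    simpa using (Finset.mem_filter.mp hm).2

end Mon

section MinDist
variable {F : Type*} [Field F] [DecidableEq F] {n : ℕ}

variable {F : Type*} [Field F] [DecidableEq F] {n : ℕ}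

lemma hasMinDist_map (D : Submodule F (Fin n → F))
    (g : (Fin n → F) ≃ₗ[F] (Fin n → F))
    (hg : ∀ x, hammingNorm (g x) = hammingNorm x) {d : ℕ} (h : hasMinDist D d) :
    hasMinDist (D.map (g : (Fin n → F) →ₗ[F] (Fin n → F))) d := by
  obtain ⟨⟨c, hc, hc0, hcn⟩, hmin⟩ := h
  constructor
  · refine ⟨g c, Submodule.mem_map_of_mem hc, ?_, ?_⟩
    · simpa using (g.map_ne_zero_iff).mpr hc0
    · rw [hg]; exact hcn
  · rintro y ⟨x, hx, rfl⟩ hy0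
    have hx0 : x ≠ 0 := by
      intro h; apply hy0; rw [h]; simp
    have : hammingNorm ((g : (Fin n → F) →ₗ[F] (Fin n → F)) x) = hammingNorm x := hg x
    rw [this]
    exact hmin x hx hx0

end MinDist

/-- Let `q > 2`.  If there exist `q`-ary linear codes with parameters `[n,k,d₁]` and
`[n,k,d₂]`, then there exists a `q`-ary LCP of codes with parameters `[n,k,d₁,d₂]`:
codes `C₁, C₂` of length `n` with `dim C₁ = k`, `dim C₂ = n - k`, `C₁ + C₂ = F_q^n`,
the minimum distance of `C₁` equal to `d₁` and the minimum distance of `C₂^⊥` equal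
to `d₂`. -/
theorem exists_lcp_of_codes_q_gt_two {F : Type*} [Field F] [Fintype F] [DecidableEq F]
    {n k d₁ d₂ : ℕ} (hq : 2 < Fintype.card F)
    (D₁ D₂ : Submodule F (Fin n → F))
    (hD₁ : Module.finrank F D₁ = k) (hD₂ : Module.finrank F D₂ = k)
    (hd₁ : hasMinDist D₁ d₁) (hd₂ : hasMinDist D₂ d₂) :
    ∃ C₁ C₂ : Submodule F (Fin n → F),
      Module.finrank F C₁ = k ∧ Module.finrank F C₂ = n - k ∧
      C₁ ⊔ C₂ = ⊤ ∧ hasMinDist C₁ d₁ ∧ hasMinDist (dualCode C₂) d₂ := by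
  classical
  -- information sets and matching permutation
  obtain ⟨S₁, hS₁card, hS₁⟩ := exists_infoset D₁ hD₁
  obtain ⟨S₂, hS₂card, hS₂⟩ := exists_infoset D₂ hD₂
  obtain ⟨σ, hσ⟩ := exists_perm_map S₁ S₂ (hS₁card.trans hS₂card.symm)
  have hone' : ∀ l : Fin n, (fun _ : Fin n => (1:F)) l ≠ 0 := fun l => one_ne_zero
  set Pe := monEquiv (fun _ => (1:F)) hone' σ with hPe
  set V := D₂.map (Pe : (Fin n → F) →ₗ[F] (Fin n → F)) with hV
  have hVrank : Module.finrank F V = k := by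
    rw [hV, LinearEquiv.finrank_map_eq]; exact hD₂
  have hVprop : ∀ v ∈ V, (∀ l ∈ S₁, v l = 0) → v = 0 := by
    rintro v ⟨x, hx, rfl⟩ hvan
    have hx0 : x = 0 := by
      apply hS₂ x hx
      intro m hm
      have hl : σ.symm m ∈ S₁ := by
        by_contra hns
        exact hσ _ hns (by rwa [Equiv.apply_symm_apply])
      have h := hvan _ hl
      simp only [LinearEquiv.coe_coe, hPe, monEquiv_apply, one_mul,
        Equiv.apply_symm_apply] at h
      exact h
    rw [hx0]; simp
  -- bases
  set B₁ : Module.Basis (Fin k) F D₁ := Module.finBasisOfFinrankEq F D₁ hD₁ with hB₁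
  set B₂ : Module.Basis (Fin k) F V := Module.finBasisOfFinrankEq F V hVrank with hB₂
  set b₁ : Fin k → (Fin n → F) := fun i => (B₁ i : Fin n → F) with hb₁
  set b₂ : Fin k → (Fin n → F) := fun j => (B₂ j : Fin n → F) with hb₂
  have hb₁mem : ∀ i, b₁ i ∈ D₁ := fun i => (B₁ i).2
  have hb₂mem : ∀ j, b₂ j ∈ V := fun j => (B₂ j).2
  have hb₁span : ∀ u ∈ D₁, ∃ x : Fin k → F, u = ∑ i, x i • b₁ i := by
    intro u hu
    refine ⟨fun i => B₁.repr ⟨u, hu⟩ i, ?_⟩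
    have h1 := B₁.sum_repr ⟨u, hu⟩
    have h2 : ((∑ i, B₁.repr ⟨u, hu⟩ i • B₁ i : D₁) : Fin n → F)
        = ∑ i, B₁.repr ⟨u, hu⟩ i • b₁ i := by
      push_cast
      rfl
    rw [← h2, h1]
  have hb₂span : ∀ w ∈ V, ∃ y : Fin k → F, w = ∑ j, y j • b₂ j := by
    intro w hw
    refine ⟨fun j => B₂.repr ⟨w, hw⟩ j, ?_⟩
    have h1 := B₂.sum_repr ⟨w, hw⟩
    have h2 : ((∑ j, B₂.repr ⟨w, hw⟩ j • B₂ j : V) : Fin n → F)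
        = ∑ j, B₂.repr ⟨w, hw⟩ j • b₂ j := by
      push_cast
      rfl
    rw [← h2, h1]
  have hb₁indep : ∀ x : Fin k → F, (∑ i, x i • b₁ i) = 0 → x = 0 := by
    intro x hx
    have h0 : (∑ i, x i • B₁ i) = (0 : D₁) := by
      apply Subtype.ext
      push_cast
      exact hx
    have := Fintype.linearIndependent_iff.mp B₁.linearIndependent x h0
    funext i; exact this i
  -- the pairing matrix
  set M : (Fin n → F) → Matrix (Fin k) (Fin k) F :=
    fun a => Matrix.of fun i j => ∑ l, a l * (b₁ i l * b₂ j l) with hM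
  have keyM : ∀ (a : Fin n → F) (x : Fin k → F) (j : Fin k),
      (Matrix.vecMul x (M a)) j = ∑ l, a l * ((∑ i, x i • b₁ i) l * b₂ j l) := by
    intro a x j
    have hu : ∀ l, (∑ i, x i • b₁ i) l = ∑ i, x i * b₁ i l := by
      intro l
      simp [Finset.sum_apply]
    simp only [hu, Matrix.vecMul, dotProduct, hM, Matrix.of_apply]
    calc ∑ i, x i * ∑ l, a l * (b₁ i l * b₂ j l)
        = ∑ i, ∑ l, x i * (a l * (b₁ i l * b₂ j l)) := by
          simp [Finset.mul_sum]
      _ = ∑ l, ∑ i, x i * (a l * (b₁ i l * b₂ j l)) := Finset.sum_comm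
      _ = ∑ l, a l * ((∑ i, x i * b₁ i l) * b₂ j l) := by
          refine Finset.sum_congr rfl fun l _ => ?_
          rw [Finset.sum_mul, Finset.mul_sum]
          exact Finset.sum_congr rfl fun i _ => by ring
  -- step 1 : the indicator of S₁ gives a nonzero determinant
  set a₀ : Fin n → F := fun l => if l ∈ S₁ then 1 else 0 with ha₀
  have hdet₀ : (M a₀).det ≠ 0 := by
    intro hdet
    obtain ⟨x, hx0, hxv⟩ := Matrix.exists_vecMul_eq_zero_iff.mpr hdet
    have humem : (∑ i, x i • b₁ i) ∈ D₁ :=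
      Submodule.sum_mem _ fun i _ => Submodule.smul_mem _ _ (hb₁mem i)
    have hu0 : (∑ i, x i • b₁ i) = 0 := by
      apply hS₁ _ humem
      intro l₀ hl₀
      obtain ⟨w, hwV, hw1, hw0⟩ :=
        exists_single_proj V S₁ (hS₁card.trans hVrank.symm) hVprop l₀ hl₀
      obtain ⟨y, hy⟩ := hb₂span w hwV
      have h1 : (0:F) = ∑ j, y j * (Matrix.vecMul x (M a₀)) j := by
        rw [hxv]; simp
      have h2 : ∑ j, y j * (Matrix.vecMul x (M a₀)) j
          = ∑ l, a₀ l * ((∑ i, x i • b₁ i) l * w l) := by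
        simp only [keyM]
        rw [hy]
        calc ∑ j, y j * ∑ l, a₀ l * ((∑ i, x i • b₁ i) l * b₂ j l)
            = ∑ j, ∑ l, y j * (a₀ l * ((∑ i, x i • b₁ i) l * b₂ j l)) := by
              simp [Finset.mul_sum]
          _ = ∑ l, ∑ j, y j * (a₀ l * ((∑ i, x i • b₁ i) l * b₂ j l)) :=
              Finset.sum_comm
          _ = ∑ l, a₀ l * ((∑ i, x i • b₁ i) l * (∑ j, y j • b₂ j) l) := by
              refine Finset.sum_congr rfl fun l _ => ?_
              simp only [Finset.sum_apply, Pi.smul_apply, smul_eq_mul,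
                Finset.mul_sum]
              exact Finset.sum_congr rfl fun j _ => by ring
      have h3 : ∑ l, a₀ l * ((∑ i, x i • b₁ i) l * w l)
          = (∑ i, x i • b₁ i) l₀ := by
        simp only [ha₀, ite_mul, one_mul, zero_mul]
        rw [← Finset.sum_filter]
        have hfil : Finset.univ.filter (· ∈ S₁) = S₁ := by
          ext l; simp
        rw [hfil]
        rw [Finset.sum_eq_single l₀]
        · rw [hw1, mul_one]
        · intro b hb hbne
          rw [hw0 b hb hbne, mul_zero]
        · intro hl; exact absurd hl₀ hl
      have := h1.trans (h2.trans h3)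
      exact this.symm
    exact hx0 (hb₁indep x hu0)
  -- the determinant is affine in each coordinate
  have haff : ∀ (l : Fin n) (x : Fin n → F), ∃ c d : F, ∀ t : F,
      (M (Function.update x l t)).det = c + d * t := by
    intro l x
    set A : Matrix (Fin k) (Fin k) F :=
      Matrix.of fun i j => ∑ m ∈ Finset.univ.erase l, x m * (b₁ i m * b₂ j m) with hA
    obtain ⟨c, d, hcd⟩ := det_add_smul_rankOne A (fun i => b₁ i l) (fun j => b₂ j l)
    refine ⟨c, d, fun t => ?_⟩
    have heq : M (Function.update x l t)
        = Matrix.of fun i j => A i j + t * ((fun i => b₁ i l) i * (fun j => b₂ j l) j) := by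
      ext i j
      simp only [hM, Matrix.of_apply, hA]
      rw [← Finset.sum_erase_add _ _ (Finset.mem_univ l)]
      congr 1
      · refine Finset.sum_congr rfl fun m hm => ?_
        rw [Function.update_of_ne (Finset.ne_of_mem_erase hm)]
      · rw [Function.update_self]
    rw [heq]
    exact hcd t
  -- Schwartz-Zippel : find a nowhere-zero scaling
  obtain ⟨a, ha, hdet⟩ :=
    exists_nonzero_point hq (fun a => (M a).det) haff a₀ hdet₀
  -- construct the codes
  set Sc := monEquiv a ha (Equiv.refl (Fin n)) with hSc
  set E := V.map (Sc : (Fin n → F) →ₗ[F] (Fin n → F)) with hE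
  have hErank : Module.finrank F E = k := by
    rw [hE, LinearEquiv.finrank_map_eq]; exact hVrank
  have hkn : k ≤ n := by
    rw [← hD₁]
    have := Submodule.finrank_le D₁
    rwa [Module.finrank_fin_fun] at this
  have hC₂rank : Module.finrank F (dualCode E) = n - k := by
    rw [finrank_dualCode, hErank]
  have hinf : D₁ ⊓ dualCode E = ⊥ := by
    rw [eq_bot_iff]
    rintro u ⟨hu₁, hu₂⟩
    rw [Submodule.mem_bot]
    by_contra hu0
    obtain ⟨x, hxeq⟩ := hb₁span u hu₁
    have hx0 : x ≠ 0 := by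
      intro h; apply hu0; rw [hxeq, h]; simp
    have hvm : Matrix.vecMul x (M a) = 0 := by
      funext j
      rw [Pi.zero_apply, keyM, ← hxeq]
      have hmem : (Sc : (Fin n → F) →ₗ[F] (Fin n → F)) (b₂ j) ∈ E :=
        Submodule.mem_map_of_mem (hb₂mem j)
      have h := hu₂ _ hmem
      simp only [LinearEquiv.coe_coe, hSc, monEquiv_apply, Equiv.refl_apply] at h
      rw [← h]
      exact Finset.sum_congr rfl fun l _ => by ring
    exact hdet (Matrix.exists_vecMul_eq_zero_iff.mp ⟨x, hx0, hvm⟩)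
  have hsup : D₁ ⊔ dualCode E = ⊤ := by
    apply Submodule.eq_top_of_finrank_eq
    have h := Submodule.finrank_sup_add_finrank_inf_eq D₁ (dualCode E)
    rw [hinf, finrank_bot, add_zero, hD₁, hC₂rank] at h
    rw [h, Module.finrank_fin_fun]
    omega
  -- minimum distances
  have hVmd : hasMinDist V d₂ := by
    rw [hV]
    exact hasMinDist_map D₂ Pe (hammingNorm_monEquiv _ _ _) hd₂
  have hEmd : hasMinDist E d₂ := by
    rw [hE]
    exact hasMinDist_map V Sc (hammingNorm_monEquiv _ _ _) hVmd
  refine ⟨D₁, dualCode E, hD₁, hC₂rank, hsup, hd₁, ?_⟩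
  rw [dualCode_dualCode]
  exact hEmd
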